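/- Fix γ > 1. Let ρ₁, ρ₂, β₁, β₂ be positive reals and u₁, u₂ reals. Define the specific entropy sᵢ = −log βᵢ − (γ−1) log ρᵢ − log 2 and the entropy variables wᵢ = (γ/(γ−1) − sᵢ/(γ−1) − βᵢ uᵢ², 2βᵢ uᵢ, −2βᵢ) for i = 1, 2. Write ρ̄ = (ρ₁+ρ₂)/2, ū = (u₁+u₂)/2, β̄ = (β₁+β₂)/2, m̄ = (ρ₁u₁ + ρ₂u₂)/2, q̄ = (u₁² + u₂²)/2, and let ρ̂ and β̂ denote the logarithmic means of (ρ₁, ρ₂) and (β₁, β₂) respectively. Define the one-dimensional Chandrashekar-type flux f = (f¹, f², f³) with f¹ = m̄, f² = ū·m̄ + ρ̄/(2β̄), and f³ = m̄/(2(γ−1)β̂) − (q̄/2)·m̄ + ū²·m̄ + (ρ̄/(2β̄))·ū. Then the contraction of the entropy-variable jump with the flux satisfies (w₂¹ − w₁¹)f¹ + (w₂² − w₁²)f² + (w₂³ − w₁³)f³ = ((ρ₂ − ρ₁)/ρ̂)·m̄ + ρ̄·(u₂ − u₁). -/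

import Mathlib

/-- The logarithmic mean of two positive reals: `(b-a)/(log b - log a)` when `a ≠ b`,
and `a` when `a = b`. -/
noncomputable def logMean (a b : ℝ) : ℝ :=
  if a = b then a else (b - a) / (Real.log b - Real.log a)

lemma logMean_pos {a b : ℝ} (ha : 0 < a) (hb : 0 < b) : 0 < logMean a b := by
  unfold logMean
  split
  · exact ha
  · rename_i h
    rcases lt_or_gt_of_ne h with hlt | hgt
    · exact div_pos (by linarith) (sub_pos.mpr (Real.log_lt_log ha hlt))
    · exact div_pos_of_neg_of_neg (by linarith) (sub_neg.mpr (Real.log_lt_log hb hgt))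

lemma sub_div_logMean {a b : ℝ} (ha : 0 < a) (hb : 0 < b) :
    (b - a) / logMean a b = Real.log b - Real.log a := by
  unfold logMean
  split
  · rename_i h; subst h; simp
  · rename_i h
    have hba : b - a ≠ 0 := sub_ne_zero.mpr (fun he => h he.symm)
    have hl : Real.log b - Real.log a ≠ 0 := by
      intro he
      exact h (Real.log_injOn_pos (Set.mem_Ioi.mpr ha) (Set.mem_Ioi.mpr hb) (by linarith))
    field_simp

lemma key_beta {γ β₁ β₂ m w₁3 w₂3 : ℝ} (hγ : 1 < γ) (hβ₁ : 0 < β₁) (hβ₂ : 0 < β₂)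
    (hw₁3 : w₁3 = -2 * β₁) (hw₂3 : w₂3 = -2 * β₂) :
    (w₂3 - w₁3) * (m / (2 * (γ - 1) * logMean β₁ β₂))
      = (Real.log β₁ - Real.log β₂) * m / (γ - 1) := by
  subst hw₁3 hw₂3
  have hB : logMean β₁ β₂ ≠ 0 := ne_of_gt (logMean_pos hβ₁ hβ₂)
  have hγ1 : γ - 1 ≠ 0 := sub_ne_zero.mpr (ne_of_gt hγ)
  have h : β₂ - β₁ = (Real.log β₂ - Real.log β₁) * logMean β₁ β₂ := by
    rw [← sub_div_logMean hβ₁ hβ₂, div_mul_cancel₀ _ hB]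
  field_simp
  ring_nf
  linear_combination (-1) * m * h

/-- Contraction of the entropy-variable jump with the one-dimensional Chandrashekar-type
convective flux: `Δw · f = (Δρ/ρ̂)·m̄ + ρ̄·Δu`. -/
theorem entropy_jump_dot_conv_flux (γ ρ₁ ρ₂ β₁ β₂ u₁ u₂ : ℝ) (hγ : 1 < γ)
    (hρ₁ : 0 < ρ₁) (hρ₂ : 0 < ρ₂) (hβ₁ : 0 < β₁) (hβ₂ : 0 < β₂)
    (s₁ s₂ : ℝ)
    (hs₁ : s₁ = -Real.log β₁ - (γ - 1) * Real.log ρ₁ - Real.log 2)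
    (hs₂ : s₂ = -Real.log β₂ - (γ - 1) * Real.log ρ₂ - Real.log 2)
    (w₁1 w₁2 w₁3 w₂1 w₂2 w₂3 : ℝ)
    (hw₁1 : w₁1 = γ / (γ - 1) - s₁ / (γ - 1) - β₁ * u₁ ^ 2)
    (hw₁2 : w₁2 = 2 * β₁ * u₁)
    (hw₁3 : w₁3 = -2 * β₁)
    (hw₂1 : w₂1 = γ / (γ - 1) - s₂ / (γ - 1) - β₂ * u₂ ^ 2)
    (hw₂2 : w₂2 = 2 * β₂ * u₂)
    (hw₂3 : w₂3 = -2 * β₂)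
    (ρbar ubar βbar mbar qbar : ℝ)
    (hρbar : ρbar = (ρ₁ + ρ₂) / 2)
    (hubar : ubar = (u₁ + u₂) / 2)
    (hβbar : βbar = (β₁ + β₂) / 2)
    (hmbar : mbar = (ρ₁ * u₁ + ρ₂ * u₂) / 2)
    (hqbar : qbar = (u₁ ^ 2 + u₂ ^ 2) / 2)
    (f1 f2 f3 : ℝ)
    (hf1 : f1 = mbar)
    (hf2 : f2 = ubar * mbar + ρbar / (2 * βbar))
    (hf3 : f3 = mbar / (2 * (γ - 1) * logMean β₁ β₂) - (qbar / 2) * mbar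
        + ubar ^ 2 * mbar + (ρbar / (2 * βbar)) * ubar) :
    (w₂1 - w₁1) * f1 + (w₂2 - w₁2) * f2 + (w₂3 - w₁3) * f3
      = ((ρ₂ - ρ₁) / logMean ρ₁ ρ₂) * mbar + ρbar * (u₂ - u₁) := by
  have hγ1 : γ - 1 ≠ 0 := sub_ne_zero.mpr (ne_of_gt hγ)
  have expand : (w₂3 - w₁3) * f3
      = (w₂3 - w₁3) * (mbar / (2 * (γ - 1) * logMean β₁ β₂))
        + (w₂3 - w₁3) * (-(qbar / 2) * mbar + ubar ^ 2 * mbar + (ρbar / (2 * βbar)) * ubar) := by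
    rw [hf3]; ring
  rw [expand, key_beta hγ hβ₁ hβ₂ hw₁3 hw₂3, sub_div_logMean hρ₁ hρ₂]
  subst hs₁ hs₂ hw₁1 hw₁2 hw₁3 hw₂1 hw₂2 hw₂3 hρbar hubar hβbar hmbar hqbar hf1 hf2
  have hβb : β₁ + β₂ ≠ 0 := by positivity
  field_simp
  ring
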